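/- For all real numbers a, b with 0 < a < 1, 0 < b < 1, and every x > 0, the triple integral ∫₀ˣ ∫₀^∞ ∫₀^w (1 − e^{−(x−y)})^{a−1} (1 − e^{−(w−u)})^{b−1} e^{−(w−u)} e^{(b+1)(y+w)} (e^{y+w} − 1)^{−(a+b+1)} du dw dy equals π Γ(a) Γ(b) / (sin(πa) Γ(a+b+1)). -/

import Mathlib

open MeasureTheory Real Set

lemma betaIoo {u v : ℝ} (hu : 0 < u) (hv : 0 < v) :
    ∫ t in Ioo (0:ℝ) 1, t ^ (u-1) * (1-t) ^ (v-1) = Gamma u * Gamma v / Gamma (u+v) := by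
  have h1 : Complex.Gamma u * Complex.Gamma v
      = Complex.Gamma (u+v) * Complex.betaIntegral u v := by
    have := Complex.Gamma_mul_Gamma_eq_betaIntegral
      (s := (u:ℂ)) (t := (v:ℂ)) (by simpa using hu) (by simpa using hv)
    simpa using this
  have h2 : Complex.betaIntegral u v
      = ((∫ t in (0:ℝ)..1, t ^ (u-1) * (1-t) ^ (v-1) : ℝ) : ℂ) := by
    rw [Complex.betaIntegral, ← intervalIntegral.integral_ofReal]
    apply intervalIntegral.integral_congr
    intro t ht
    simp only [uIcc_of_le (by norm_num : (0:ℝ) ≤ 1), mem_Icc] at ht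
    simp only []
    rw [Complex.ofReal_mul, Complex.ofReal_cpow ht.1, Complex.ofReal_cpow (by linarith [ht.2] : (0:ℝ) ≤ 1 - t)]
    push_cast
    ring
  have hG : Real.Gamma (u+v) ≠ 0 := (Real.Gamma_pos_of_pos (by linarith)).ne'
  have h3 : ∫ t in (0:ℝ)..1, t ^ (u-1) * (1-t) ^ (v-1)
      = Gamma u * Gamma v / Gamma (u+v) := by
    rw [h2] at h1
    rw [Complex.Gamma_ofReal, Complex.Gamma_ofReal] at h1
    rw [show ((u:ℂ)+v) = ((u+v:ℝ):ℂ) by push_cast; ring, Complex.Gamma_ofReal] at h1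
    have key : Gamma u * Gamma v = Gamma (u+v) * ∫ t in (0:ℝ)..1, t ^ (u-1) * (1-t) ^ (v-1) := by
      exact_mod_cast h1
    field_simp
    linarith [key]
  rw [← h3, intervalIntegral.integral_of_le (by norm_num : (0:ℝ) ≤ 1),
    MeasureTheory.integral_Ioc_eq_integral_Ioo]

lemma sub_to_beta {p q c : ℝ} {s : Set ℝ} (hs : MeasurableSet s) {φ φ' : ℝ → ℝ}
    (hderiv : ∀ t ∈ s, HasDerivWithinAt φ (φ' t) s t) (hinj : InjOn φ s)
    (himg : φ '' s = Ioo 0 1) (hpos : ∀ t ∈ s, 0 ≤ φ' t) {F : ℝ → ℝ}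
    (hF : ∀ t ∈ s, F t = c * (φ' t * ((φ t) ^ p * (1 - φ t) ^ q))) :
    ∫ t in s, F t = c * ∫ t in Ioo (0:ℝ) 1, t ^ p * (1-t) ^ q := by
  rw [← himg, MeasureTheory.integral_image_eq_integral_abs_deriv_smul hs hderiv hinj,
    ← integral_const_mul]
  apply MeasureTheory.setIntegral_congr_fun hs
  intro t ht
  simp only [smul_eq_mul]
  rw [hF t ht, abs_of_nonneg (hpos t ht)]

lemma exp_sub_one_pos {w : ℝ} (hw : 0 < w) : 0 < Real.exp w - 1 := by
  have := Real.exp_lt_exp.mpr hw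
  rw [Real.exp_zero] at this
  linarith

lemma one_sub_exp_neg_pos {w : ℝ} (hw : 0 < w) : 0 < 1 - Real.exp (-w) := by
  have := Real.exp_lt_exp.mpr (show -w < 0 by linarith)
  rw [Real.exp_zero] at this
  linarith

lemma inner_eval {b w : ℝ} (hb : 0 < b) (hw : 0 < w) :
    ∫ u in Ioo (0:ℝ) w, (1 - Real.exp (-(w-u))) ^ (b-1) * Real.exp (-(w-u))
      = (1 - Real.exp (-w)) ^ b * (Gamma 1 * Gamma b / Gamma (1+b)) := by
  have hD : 0 < Real.exp w - 1 := exp_sub_one_pos hw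
  have hK : 0 < 1 - Real.exp (-w) := one_sub_exp_neg_pos hw
  set φ : ℝ → ℝ := fun u => (Real.exp u - 1) / (Real.exp w - 1) with hφ
  have hmono : StrictMonoOn φ (Ioo 0 w) := by
    intro u1 _ u2 _ h
    have := Real.exp_lt_exp.mpr h
    simp only [hφ]
    gcongr
  have hbound : ∀ u ∈ Ioo (0:ℝ) w, 0 < φ u ∧ φ u < 1 := by
    rintro u ⟨hu0, huw⟩
    constructor
    · exact div_pos (exp_sub_one_pos hu0) hD
    · rw [div_lt_one hD]
      have := Real.exp_lt_exp.mpr huw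
      linarith
  have himg : φ '' Ioo 0 w = Ioo 0 1 := by
    ext t
    simp only [mem_image, mem_Ioo]
    constructor
    · rintro ⟨u, hu, rfl⟩
      exact hbound u (by simpa using hu)
    · rintro ⟨ht0, ht1⟩
      have hargpos : (0:ℝ) < 1 + t * (Real.exp w - 1) := by nlinarith
      refine ⟨Real.log (1 + t * (Real.exp w - 1)), ⟨?_, ?_⟩, ?_⟩
      · exact Real.log_pos (by nlinarith)
      · have h2 : 1 + t * (Real.exp w - 1) < Real.exp w := by nlinarith
        have := Real.log_lt_log hargpos h2
        rwa [Real.log_exp] at this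
      · show (Real.exp (Real.log (1 + t * (Real.exp w - 1))) - 1) / (Real.exp w - 1) = t
        rw [Real.exp_log hargpos]
        field_simp
        ring
  have := sub_to_beta (p := (1:ℝ)-1) (q := b-1) (c := (1 - Real.exp (-w)) ^ b)
    (s := Ioo 0 w) measurableSet_Ioo
    (φ := φ) (φ' := fun u => Real.exp u / (Real.exp w - 1))
    (fun u _ => (((Real.hasDerivAt_exp u).sub_const 1).div_const _).hasDerivWithinAt)
    (hmono.injOn) himg
    (fun u _ => by positivity)
    (F := fun u => (1 - Real.exp (-(w-u))) ^ (b-1) * Real.exp (-(w-u)))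
    ?_
  · rw [this, betaIoo one_pos hb]
  · rintro u ⟨hu0, huw⟩
    have hE := Real.exp_pos u
    have hW := Real.exp_pos w
    have e1 : Real.exp (-(w-u)) = Real.exp u * (Real.exp w)⁻¹ := by
      rw [← Real.exp_neg, ← Real.exp_add]; ring_nf
    have key : 1 - Real.exp (-(w-u)) = (1 - φ u) * (1 - Real.exp (-w)) := by
      rw [e1, hφ, Real.exp_neg]
      field_simp
      ring
    have h1φ : 0 < 1 - φ u := by
      have := (hbound u ⟨hu0, huw⟩).2; linarith
    have hsplit : (1 - Real.exp (-w)) ^ b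
        = (1 - Real.exp (-w)) ^ (b-1) * (1 - Real.exp (-w)) := by
      nth_rewrite 1 [show b = b - 1 + 1 by ring]
      rw [Real.rpow_add_one hK.ne' (b-1)]
    rw [key, Real.mul_rpow h1φ.le hK.le, hsplit,
      show (1:ℝ)-1 = 0 by norm_num, Real.rpow_zero, e1, Real.exp_neg]
    field_simp

lemma middle_eval {a b y : ℝ} (ha : 0 < a) (hb : 0 < b) (hy : 0 < y) :
    ∫ w in Ioi (0:ℝ), (1 - Real.exp (-w)) ^ b * Real.exp ((b+1)*(y+w))
        * (Real.exp (y+w) - 1) ^ (-(a+b+1))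
      = (Real.exp y - 1) ^ (-a) * (Gamma (b+1) * Gamma a / Gamma (b+1+a)) := by
  set c := Real.exp y with hcdef
  have hc : 1 < c := by
    rw [hcdef, show (1:ℝ) = Real.exp 0 by simp]
    exact Real.exp_lt_exp.mpr hy
  have hc1 : 0 < c - 1 := by linarith
  have hden : ∀ w : ℝ, 0 < w → 0 < c * Real.exp w - 1 := by
    intro w hw
    have h := exp_sub_one_pos hw
    nlinarith [Real.exp_pos w]
  set φ : ℝ → ℝ := fun w => 1 - (c - 1) / (c * Real.exp w - 1) with hφ
  have hmono : StrictMonoOn φ (Ioi 0) := by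
    intro w1 h1 w2 h2 h
    have hd1 := hden w1 h1
    have hd2 := hden w2 h2
    have hlt : c * Real.exp w1 - 1 < c * Real.exp w2 - 1 := by
      have := Real.exp_lt_exp.mpr h
      nlinarith
    have := div_lt_div_of_pos_left hc1 hd1 hlt
    simp only [hφ]
    linarith
  have hbound : ∀ w ∈ Ioi (0:ℝ), 0 < φ w ∧ φ w < 1 := by
    intro w hw
    have hw' : (0:ℝ) < w := hw
    have hd := hden w hw'
    have hE := exp_sub_one_pos hw'
    constructor
    · have : (c - 1) / (c * Real.exp w - 1) < 1 := by
        rw [div_lt_one hd]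
        nlinarith [Real.exp_pos w]
      simp only [hφ]; linarith
    · simp only [hφ]
      have : 0 < (c - 1) / (c * Real.exp w - 1) := div_pos hc1 hd
      linarith
  have himg : φ '' Ioi 0 = Ioo 0 1 := by
    ext t
    simp only [mem_image, mem_Ioi, mem_Ioo]
    constructor
    · rintro ⟨w, hw, rfl⟩
      exact hbound w hw
    · rintro ⟨ht0, ht1⟩
      have h1t : 0 < 1 - t := by linarith
      set r := (c - t) / (c * (1 - t)) with hrdef
      have hr1 : 1 < r := by
        rw [hrdef, lt_div_iff₀ (by positivity)]
        nlinarith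
      refine ⟨Real.log r, Real.log_pos hr1, ?_⟩
      simp only [hφ]
      rw [Real.exp_log (by linarith)]
      have hcr : c * r - 1 = (c - 1) / (1 - t) := by
        rw [hrdef]
        field_simp
        ring
      rw [hcr]
      field_simp
      ring
  have hd' : ∀ w ∈ Ioi (0:ℝ), HasDerivAt φ ((c-1)*(c*Real.exp w)/(c*Real.exp w - 1)^2) w := by
    intro w hw
    have hd := hden w hw
    have h1 : HasDerivAt (fun w => c * Real.exp w - 1) (c * Real.exp w) w := by
      simpa using ((Real.hasDerivAt_exp w).const_mul c).sub_const 1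
    have h2 := (h1.inv hd.ne').const_mul (c-1)
    have h3 := (hasDerivAt_const w (1:ℝ)).sub h2
    exact h3.congr_deriv (by ring)
  have := sub_to_beta (p := (b+1)-1) (q := a-1) (c := (Real.exp y - 1) ^ (-a))
    (s := Ioi 0) measurableSet_Ioi
    (φ := φ) (φ' := fun w => (c-1)*(c*Real.exp w)/(c*Real.exp w - 1)^2)
    (fun w hw => (hd' w hw).hasDerivWithinAt) (hmono.injOn) himg
    (fun w hw => by have := hden w hw; positivity)
    (F := fun w => (1 - Real.exp (-w)) ^ b * Real.exp ((b+1)*(y+w))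
        * (Real.exp (y+w) - 1) ^ (-(a+b+1))) ?_
  · rw [this, betaIoo (by linarith : (0:ℝ) < b+1) ha]
  · intro w hw
    have hw' : (0:ℝ) < w := hw
    have hE := Real.exp_pos w
    have hE1 := exp_sub_one_pos hw'
    have hd := hden w hw'
    have hφw : φ w = c * (Real.exp w - 1) / (c * Real.exp w - 1) := by
      simp only [hφ]
      field_simp
      ring
    have h1φ : 1 - φ w = (c - 1) / (c * Real.exp w - 1) := by
      simp only [hφ]; ring
    have hyw : Real.exp (y + w) = c * Real.exp w := by
      rw [Real.exp_add]
    have hexpm : Real.exp ((b+1)*(y+w)) = (c * Real.exp w) ^ (b+1) := by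
      rw [mul_comm (b+1), Real.exp_mul, hyw]
    have hnegw : 1 - Real.exp (-w) = (Real.exp w - 1) / Real.exp w := by
      rw [Real.exp_neg]
      field_simp
    rw [h1φ, hφw, hyw, hexpm, hnegw,
      show (b+1)-1 = b by ring,
      show -(a+b+1) = (-a) + (-b) + (-1) by ring,
      Real.rpow_add hd, Real.rpow_add hd, Real.rpow_neg_one,
      Real.rpow_neg hd.le a, Real.rpow_neg hd.le b,
      Real.rpow_neg hc1.le a,
      Real.div_rpow hE1.le hE.le,
      Real.div_rpow (by positivity : (0:ℝ) ≤ c * (Real.exp w - 1)) hd.le,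
      Real.div_rpow hc1.le hd.le,
      Real.mul_rpow (by linarith : (0:ℝ) ≤ c) hE.le,
      Real.mul_rpow (by linarith : (0:ℝ) ≤ c) hE1.le,
      show b + 1 = b + 1 by rfl,
      Real.rpow_add (by linarith : (0:ℝ) < c) b 1,
      Real.rpow_add hE b 1,
      Real.rpow_one, Real.rpow_one,
      show a - 1 = a + (-1) by ring,
      Real.rpow_add hc1, Real.rpow_add hd,
      Real.rpow_neg_one, Real.rpow_neg_one]
    have p1 : (0:ℝ) < c ^ b := Real.rpow_pos_of_pos (by linarith) b
    have p2 : (0:ℝ) < Real.exp w ^ b := Real.rpow_pos_of_pos hE b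
    have p3 : (0:ℝ) < (c * Real.exp w - 1) ^ a := Real.rpow_pos_of_pos hd a
    have p4 : (0:ℝ) < (c * Real.exp w - 1) ^ b := Real.rpow_pos_of_pos hd b
    have p5 : (0:ℝ) < (c - 1) ^ a := Real.rpow_pos_of_pos hc1 a
    have p6 : (0:ℝ) < (Real.exp w - 1) ^ b := Real.rpow_pos_of_pos hE1 b
    field_simp

lemma outer_eval {a x : ℝ} (ha : 0 < a) (ha1 : a < 1) (hx : 0 < x) :
    ∫ y in Ioo (0:ℝ) x, (1 - Real.exp (-(x-y))) ^ (a-1) * (Real.exp y - 1) ^ (-a)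
      = Gamma (1-a) * Gamma a / Gamma (1-a+a) := by
  have hM1 : Real.exp (-x) < 1 := by
    have := one_sub_exp_neg_pos hx; linarith
  have hM0 : 0 < Real.exp (-x) := Real.exp_pos _
  have hK : 0 < 1 - Real.exp (-x) := one_sub_exp_neg_pos hx
  set φ : ℝ → ℝ := fun y => (1 - Real.exp (-y)) / (1 - Real.exp (-x)) with hφ
  have hmono : StrictMonoOn φ (Ioo 0 x) := by
    intro y1 _ y2 _ h
    have : Real.exp (-y2) < Real.exp (-y1) := Real.exp_lt_exp.mpr (by linarith)
    simp only [hφ]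
    gcongr
  have hbound : ∀ y ∈ Ioo (0:ℝ) x, 0 < φ y ∧ φ y < 1 := by
    rintro y ⟨hy0, hyx⟩
    have h1 := one_sub_exp_neg_pos hy0
    have h2 : Real.exp (-x) < Real.exp (-y) := Real.exp_lt_exp.mpr (by linarith)
    constructor
    · exact div_pos h1 hK
    · rw [hφ, div_lt_one hK]; linarith
  have himg : φ '' Ioo 0 x = Ioo 0 1 := by
    ext t
    simp only [mem_image, mem_Ioo]
    constructor
    · rintro ⟨y, hy, rfl⟩
      exact hbound y (by simpa using hy)
    · rintro ⟨ht0, ht1⟩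
      set r := 1 - t * (1 - Real.exp (-x)) with hrdef
      have hr0 : 0 < r := by nlinarith
      have hr1 : r < 1 := by nlinarith
      have hMr : Real.exp (-x) < r := by nlinarith
      refine ⟨-Real.log r, ⟨?_, ?_⟩, ?_⟩
      · have := Real.log_neg hr0 hr1; linarith
      · have := Real.log_lt_log hM0 hMr
        rw [Real.log_exp] at this
        linarith
      · simp only [hφ, neg_neg]
        rw [Real.exp_log hr0, hrdef]
        field_simp
        ring
  have hd' : ∀ y ∈ Ioo (0:ℝ) x,
      HasDerivAt φ (Real.exp (-y) / (1 - Real.exp (-x))) y := by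
    intro y _
    have h0 : HasDerivAt (fun y : ℝ => Real.exp (-y)) (-Real.exp (-y)) y := by
      simpa using ((hasDerivAt_id y).neg).exp
    have h1 := ((hasDerivAt_const y (1:ℝ)).sub h0).div_const (1 - Real.exp (-x))
    exact h1.congr_deriv (by ring)
  have := sub_to_beta (p := (1-a)-1) (q := a-1) (c := (1:ℝ))
    (s := Ioo 0 x) measurableSet_Ioo
    (φ := φ) (φ' := fun y => Real.exp (-y) / (1 - Real.exp (-x)))
    (fun y hy => (hd' y hy).hasDerivWithinAt) (hmono.injOn) himg
    (fun y _ => by positivity)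
    (F := fun y => (1 - Real.exp (-(x-y))) ^ (a-1) * (Real.exp y - 1) ^ (-a)) ?_
  · rw [this, betaIoo (by linarith : (0:ℝ) < 1-a) ha, one_mul]
  · rintro y ⟨hy0, hyx⟩
    have hm0 : 0 < Real.exp (-y) := Real.exp_pos _
    have hm1 : Real.exp (-y) < 1 := by have := one_sub_exp_neg_pos hy0; linarith
    have hMm : Real.exp (-x) < Real.exp (-y) := Real.exp_lt_exp.mpr (by linarith)
    set m := Real.exp (-y) with hmdef
    set M := Real.exp (-x) with hMdef
    have hey : Real.exp y = m⁻¹ := by rw [hmdef, ← Real.exp_neg, neg_neg]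
    have he1 : Real.exp (-(x-y)) = M * m⁻¹ := by
      rw [hMdef, hmdef, ← Real.exp_neg, neg_neg, ← Real.exp_add]
      ring_nf
    have key1 : 1 - Real.exp (-(x-y)) = (m - M) / m := by
      rw [he1]; field_simp
    have key2 : Real.exp y - 1 = (1 - m) / m := by
      rw [hey]; field_simp
    have key3 : φ y = (1 - m) / (1 - M) := by simp only [hφ, hmdef]
    have key4 : 1 - φ y = (m - M) / (1 - M) := by
      simp only [hφ]; field_simp; rw [hmdef]; ring
    have hmM : 0 < m - M := by linarith
    have h1m : 0 < 1 - m := by linarith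
    have h1M : 0 < 1 - M := by linarith
    rw [key1, key2, key4, key3,
      show (1-a)-1 = -a by ring,
      show a - 1 = a + (-1) by ring,
      Real.rpow_neg (by positivity : (0:ℝ) ≤ (1-m)/(1-M)),
      Real.rpow_neg (by positivity : (0:ℝ) ≤ (1-m)/m),
      Real.div_rpow hmM.le hm0.le,
      Real.div_rpow hmM.le h1M.le,
      Real.div_rpow h1m.le hm0.le,
      Real.div_rpow h1m.le h1M.le,
      Real.rpow_add hmM, Real.rpow_add hm0, Real.rpow_add h1M,
      Real.rpow_neg_one, Real.rpow_neg_one, Real.rpow_neg_one]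
    have p1 : (0:ℝ) < (m - M) ^ a := Real.rpow_pos_of_pos hmM a
    have p2 : (0:ℝ) < m ^ a := Real.rpow_pos_of_pos hm0 a
    have p3 : (0:ℝ) < (1 - m) ^ a := Real.rpow_pos_of_pos h1m a
    have p4 : (0:ℝ) < (1 - M) ^ a := Real.rpow_pos_of_pos h1M a
    field_simp

theorem statement16 (a b x : ℝ) (ha : 0 < a) (ha1 : a < 1) (hb : 0 < b) (hb1 : b < 1)
    (hx : 0 < x) :
    (∫ y in Ioo (0:ℝ) x, ∫ w in Ioi (0:ℝ), ∫ u in Ioo (0:ℝ) w,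
        (1 - Real.exp (-(x - y))) ^ (a - 1) * (1 - Real.exp (-(w - u))) ^ (b - 1)
          * Real.exp (-(w - u)) * Real.exp ((b + 1) * (y + w))
          * (Real.exp (y + w) - 1) ^ (-(a + b + 1)))
      = π * Gamma a * Gamma b / (Real.sin (π * a) * Gamma (a + b + 1)) := by
  set B1 : ℝ := Gamma 1 * Gamma b / Gamma (1+b) with hB1
  set B2 : ℝ := Gamma (b+1) * Gamma a / Gamma (b+1+a) with hB2
  have step1 : (∫ y in Ioo (0:ℝ) x, ∫ w in Ioi (0:ℝ), ∫ u in Ioo (0:ℝ) w,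
        (1 - Real.exp (-(x - y))) ^ (a - 1) * (1 - Real.exp (-(w - u))) ^ (b - 1)
          * Real.exp (-(w - u)) * Real.exp ((b + 1) * (y + w))
          * (Real.exp (y + w) - 1) ^ (-(a + b + 1)))
      = ∫ y in Ioo (0:ℝ) x, (B1 * B2)
          * ((1 - Real.exp (-(x - y))) ^ (a-1) * (Real.exp y - 1) ^ (-a)) := by
    apply MeasureTheory.setIntegral_congr_fun measurableSet_Ioo
    rintro y ⟨hy0, hyx⟩
    have inner2 : (∫ w in Ioi (0:ℝ), ∫ u in Ioo (0:ℝ) w,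
        (1 - Real.exp (-(x - y))) ^ (a - 1) * (1 - Real.exp (-(w - u))) ^ (b - 1)
          * Real.exp (-(w - u)) * Real.exp ((b + 1) * (y + w))
          * (Real.exp (y + w) - 1) ^ (-(a + b + 1)))
        = ∫ w in Ioi (0:ℝ), (B1 * (1 - Real.exp (-(x - y))) ^ (a-1))
            * ((1 - Real.exp (-w)) ^ b * Real.exp ((b+1)*(y+w))
               * (Real.exp (y+w) - 1) ^ (-(a+b+1))) := by
      apply MeasureTheory.setIntegral_congr_fun measurableSet_Ioi
      intro w hw
      have hw' : (0:ℝ) < w := hw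
      have e1 : (∫ u in Ioo (0:ℝ) w,
          (1 - Real.exp (-(x - y))) ^ (a - 1) * (1 - Real.exp (-(w - u))) ^ (b - 1)
            * Real.exp (-(w - u)) * Real.exp ((b + 1) * (y + w))
            * (Real.exp (y + w) - 1) ^ (-(a + b + 1)))
          = ∫ u in Ioo (0:ℝ) w,
            ((1 - Real.exp (-(x - y))) ^ (a - 1) * Real.exp ((b + 1) * (y + w))
              * (Real.exp (y + w) - 1) ^ (-(a + b + 1)))
            * ((1 - Real.exp (-(w-u))) ^ (b-1) * Real.exp (-(w-u))) := by
        apply MeasureTheory.setIntegral_congr_fun measurableSet_Ioo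
        intro u _
        ring
      dsimp only
      rw [e1, MeasureTheory.integral_const_mul, inner_eval hb hw']
      ring
    dsimp only
    rw [inner2, MeasureTheory.integral_const_mul, middle_eval ha hb hy0]
    ring
  rw [step1, MeasureTheory.integral_const_mul, outer_eval ha ha1 hx]
  have hsin : Real.sin (π * a) ≠ 0 := by
    apply ne_of_gt
    apply Real.sin_pos_of_pos_of_lt_pi (by positivity)
    nlinarith [Real.pi_pos]
  have hrefl : Gamma a * Gamma (1-a) = π / Real.sin (π * a) :=
    Real.Gamma_mul_Gamma_one_sub a
  have hGa : Gamma a ≠ 0 := (Real.Gamma_pos_of_pos ha).ne'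
  have hGb : Gamma b ≠ 0 := (Real.Gamma_pos_of_pos hb).ne'
  have hGb1 : Gamma (b+1) ≠ 0 := (Real.Gamma_pos_of_pos (by linarith)).ne'
  have hGab : Gamma (a+b+1) ≠ 0 := (Real.Gamma_pos_of_pos (by linarith)).ne'
  rw [hB1, hB2, show (1:ℝ)+b = b+1 by ring, show b+1+a = a+b+1 by ring,
    show (1:ℝ)-a+a = 1 by ring, Real.Gamma_one]
  have hrefl' : Gamma a * Gamma (1-a) * Real.sin (π * a) = π := by
    rw [hrefl]; field_simp
  field_simp
  rw [hrefl, mul_comm π a]
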